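/- Fermionic reflection relation: the extended free boundary state |v,t⟩ satisfies ψ(z)|v,t⟩ = t^{−1} · (v − z)/(v + z) · ψ*(v²/z) |v,t⟩ for v < |z| (as an identity of vector-valued Laurent series). -/

import Mathlib

noncomputable section
open Classical

/-!
Statement 17: the fermionic reflection relation
`ψ(z)|v,t⟩ = t⁻¹ · (v − z)/(v + z) · ψ*(v²/z) |v,t⟩`
as an identity of vector-valued Laurent series in `z` (valid for `v < |z|`).

The half-integer `m + 1/2` is encoded by `m : ℤ`, and the Fock space by coefficient
functions `f : Set ℤ → ℂ` with `f T = ⟨T|f⟩`.  As an identity of Laurent series, the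
relation means exactly that, after clearing the denominator,
`(v + z) ψ(z) |v,t⟩ = t⁻¹ (v − z) ψ*(v²/z) |v,t⟩`,
the coefficients of each power `z^{m+1/2}` on the two sides agree.  Since
`ψ(z) = Σ_m ψ_{m+1/2} z^{m+1/2}` and
`ψ*(v²/z) = Σ_m ψ_{m+1/2}^* (v²/z)^{−m−1/2} = Σ_m ψ_{m+1/2}^* v^{−2m−1} z^{m+1/2}`,
the coefficient of `z^{m+1/2}`, evaluated at a basis covector `⟨T|`, reads
`v·(ψ_{m+1/2}|v,t⟩)(T) + (ψ_{m−1/2}|v,t⟩)(T)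
  = t⁻¹ ( v^{−2m} (ψ_{m+1/2}^*|v,t⟩)(T) − v^{−2m+1} (ψ_{m−1/2}^*|v,t⟩)(T) )`,
which is the statement below.
-/

def posPart (S : Set ℤ) : Set ℤ := S ∩ {m | 0 ≤ m}
def negPart (S : Set ℤ) : Set ℤ := {m | m < 0} \ S
def Admissible (S : Set ℤ) : Prop := (posPart S).Finite ∧ (negPart S).Finite
def charge (S : Set ℤ) : ℤ := ((posPart S).ncard : ℤ) - ((negPart S).ncard : ℤ)
def energy (S : Set ℤ) : ℝ :=
  (∑ᶠ m ∈ posPart S, ((m : ℝ) + 1/2)) - ∑ᶠ m ∈ negPart S, ((m : ℝ) + 1/2)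
def jcount (S : Set ℤ) (k : ℤ) : ℕ := (S ∩ {m | k < m}).ncard

def psiAct (k : ℤ) (f : Set ℤ → ℂ) : Set ℤ → ℂ := fun T =>
  if k ∈ T then (-1 : ℂ) ^ jcount T k * f (T \ {k}) else 0

def psiStarAct (k : ℤ) (f : Set ℤ → ℂ) : Set ℤ → ℂ := fun T =>
  if k ∉ T then (-1 : ℂ) ^ jcount T k * f (insert k T) else 0

/-- The extended free boundary state `|v,t⟩ = Σ_{S : C(S) even} t^{C(S)/2} v^{H(S)}|S⟩`. -/
def fbCoeff (v t : ℝ) (S : Set ℤ) : ℂ :=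
  if Even (charge S) then ((t ^ (charge S / 2) * v ^ energy S : ℝ) : ℂ) else 0

-- auxiliary lemmas

lemma posPart_insert_of_nonneg {S : Set ℤ} {k : ℤ} (hk : 0 ≤ k) :
    posPart (insert k S) = insert k (posPart S) := by
  ext x; unfold _root_.posPart; simp only [ Set.mem_inter_iff, Set.mem_insert_iff, Set.mem_setOf_eq]
  constructor
  · rintro ⟨h1 | h1, h2⟩
    · exact Or.inl h1
    · exact Or.inr ⟨h1, h2⟩
  · rintro (rfl | ⟨h1, h2⟩)
    · exact ⟨Or.inl rfl, hk⟩
    · exact ⟨Or.inr h1, h2⟩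

lemma posPart_insert_of_neg {S : Set ℤ} {k : ℤ} (hk : k < 0) :
    posPart (insert k S) = posPart S := by
  ext x; unfold _root_.posPart; simp only [ Set.mem_inter_iff, Set.mem_insert_iff, Set.mem_setOf_eq]
  constructor
  · rintro ⟨h1 | h1, h2⟩
    · omega
    · exact ⟨h1, h2⟩
  · rintro ⟨h1, h2⟩; exact ⟨Or.inr h1, h2⟩

lemma negPart_insert_of_nonneg {S : Set ℤ} {k : ℤ} (hk : 0 ≤ k) :
    negPart (insert k S) = negPart S := by
  ext x; unfold _root_.negPart; simp only [ Set.mem_diff, Set.mem_insert_iff, Set.mem_setOf_eq]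
  constructor
  · rintro ⟨h1, h2⟩; exact ⟨h1, fun h => h2 (Or.inr h)⟩
  · rintro ⟨h1, h2⟩; exact ⟨h1, by rintro (rfl | h); omega; exact h2 h⟩

lemma negPart_insert_of_neg {S : Set ℤ} {k : ℤ} (hk : k < 0) :
    negPart (insert k S) = negPart S \ {k} := by
  ext x; unfold _root_.negPart; simp only [ Set.mem_diff, Set.mem_insert_iff, Set.mem_setOf_eq,
    Set.mem_singleton_iff]
  constructor
  · rintro ⟨h1, h2⟩
    exact ⟨⟨h1, fun h => h2 (Or.inr h)⟩, fun h => h2 (Or.inl h)⟩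
  · rintro ⟨⟨h1, h2⟩, h3⟩
    exact ⟨h1, by rintro (rfl | h); exact h3 rfl; exact h2 h⟩

lemma admissible_insert {S : Set ℤ} (hS : Admissible S) (k : ℤ) :
    Admissible (insert k S) := by
  rcases le_or_gt 0 k with hk | hk
  · exact ⟨by rw [posPart_insert_of_nonneg hk]; exact hS.1.insert k,
      by rw [negPart_insert_of_nonneg hk]; exact hS.2⟩
  · exact ⟨by rw [posPart_insert_of_neg hk]; exact hS.1,
      by rw [negPart_insert_of_neg hk]; exact hS.2.diff⟩

lemma admissible_diff {S : Set ℤ} (hS : Admissible S) (k : ℤ) :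
    Admissible (S \ {k}) := by
  constructor
  · exact hS.1.subset fun x ⟨h1, h2⟩ => ⟨h1.1, h2⟩
  · refine ((hS.2.insert k).subset ?_)
    rintro x ⟨h1, h2⟩
    by_cases hx : x = k
    · exact Or.inl hx
    · exact Or.inr ⟨h1, fun h => h2 ⟨h, hx⟩⟩

lemma charge_insert {S : Set ℤ} (hS : Admissible S) {k : ℤ} (hk : k ∉ S) :
    charge (insert k S) = charge S + 1 := by
  rcases le_or_gt 0 k with h | h
  · rw [charge, posPart_insert_of_nonneg h, negPart_insert_of_nonneg h,
      Set.ncard_insert_of_notMem (fun hc => hk hc.1) hS.1]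
    unfold charge; push_cast; ring
  · have hkneg : k ∈ negPart S := ⟨h, hk⟩
    have h1 : 1 ≤ (negPart S).ncard := by
      have := Set.ncard_pos hS.2 |>.2 ⟨k, hkneg⟩; omega
    rw [charge, posPart_insert_of_neg h, negPart_insert_of_neg h,
      Set.ncard_diff_singleton_of_mem hkneg]
    unfold charge; push_cast [h1]; omega

lemma energy_insert {S : Set ℤ} (hS : Admissible S) {k : ℤ} (hk : k ∉ S) :
    energy (insert k S) = energy S + ((k : ℝ) + 1/2) := by
  rcases le_or_gt 0 k with h | h
  · rw [energy, posPart_insert_of_nonneg h, negPart_insert_of_nonneg h,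
      finsum_mem_insert _ (fun hc => hk hc.1) hS.1]
    unfold energy; ring
  · have hkneg : k ∈ negPart S := ⟨h, hk⟩
    have : ∑ᶠ m ∈ negPart S, ((m : ℝ) + 1/2)
        = ((k : ℝ) + 1/2) + ∑ᶠ m ∈ negPart S \ {k}, ((m : ℝ) + 1/2) := by
      conv_lhs => rw [show negPart S = insert k (negPart S \ {k}) by
        rw [Set.insert_diff_singleton, Set.insert_eq_of_mem hkneg]]
      exact finsum_mem_insert _ (fun hc => hc.2 rfl) (hS.2.diff)
    rw [energy, posPart_insert_of_neg h, negPart_insert_of_neg h]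
    unfold energy; rw [this]; ring

lemma charge_diff {S : Set ℤ} (hS : Admissible S) {k : ℤ} (hk : k ∈ S) :
    charge (S \ {k}) = charge S - 1 := by
  have h := charge_insert (admissible_diff hS k) (k := k) (fun hc => hc.2 rfl)
  rw [Set.insert_diff_singleton, Set.insert_eq_of_mem hk] at h
  omega

lemma energy_diff {S : Set ℤ} (hS : Admissible S) {k : ℤ} (hk : k ∈ S) :
    energy (S \ {k}) = energy S - ((k : ℝ) + 1/2) := by
  have h := energy_insert (admissible_diff hS k) (k := k) (fun hc => hc.2 rfl)
  rw [Set.insert_diff_singleton, Set.insert_eq_of_mem hk] at h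
  linarith

lemma finite_inter_gt {S : Set ℤ} (hS : Admissible S) (k : ℤ) :
    (S ∩ {x | k < x}).Finite := by
  refine (hS.1.union (Set.finite_Ioo k 0)).subset ?_
  rintro x ⟨hx, hk⟩
  rcases le_or_gt 0 x with h | h
  · exact Or.inl ⟨hx, h⟩
  · exact Or.inr ⟨hk, h⟩

lemma jcount_pred {S : Set ℤ} (hS : Admissible S) (m : ℤ) :
    jcount S (m - 1) = jcount S m + (if m ∈ S then 1 else 0) := by
  have hsplit : S ∩ {x | m - 1 < x} = (S ∩ {x | m < x}) ∪ (S ∩ {m}) := by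
    ext x
    simp only [Set.mem_inter_iff, Set.mem_setOf_eq, Set.mem_union, Set.mem_singleton_iff]
    constructor
    · rintro ⟨h1, h2⟩
      rcases lt_or_eq_of_le (by omega : m ≤ x) with h | h
      · exact Or.inl ⟨h1, h⟩
      · exact Or.inr ⟨h1, h.symm⟩
    · rintro (⟨h1, h2⟩ | ⟨h1, rfl⟩) <;> exact ⟨h1, by omega⟩
  by_cases hm : m ∈ S
  · have : S ∩ {m} = {m} :=
      Set.inter_eq_self_of_subset_right (Set.singleton_subset_iff.2 hm)
    rw [jcount, hsplit, this, if_pos hm]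
    rw [show (S ∩ {x | m < x}) ∪ {m} = insert m (S ∩ {x | m < x}) by
      rw [Set.union_singleton]]
    rw [Set.ncard_insert_of_notMem (fun hc => by exact absurd hc.2 (by simp)) (finite_inter_gt hS m)]
    rfl
  · have : S ∩ {m} = ∅ := Set.inter_singleton_eq_empty.2 hm
    rw [jcount, hsplit, this, Set.union_empty, if_neg hm]
    rfl

lemma sign_pred {S : Set ℤ} (hS : Admissible S) (m : ℤ) :
    ((-1 : ℂ) ^ jcount S (m - 1)) = (if m ∈ S then -1 else 1) * (-1 : ℂ) ^ jcount S m := by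
  rw [jcount_pred hS m]
  by_cases hm : m ∈ S <;> simp [hm, pow_succ, mul_comm]

lemma rpow_key {v : ℝ} (hv : 0 < v) (a b : ℝ) (k : ℤ) (h : a = (k : ℝ) + b) :
    v ^ a = v ^ k * v ^ b := by
  rw [h, Real.rpow_add hv, Real.rpow_intCast]

theorem fermionic_reflection (v t : ℝ) (hv : 0 < v) (hv1 : v < 1) (ht : t ≠ 0)
    (T : Set ℤ) (hT : Admissible T) (m : ℤ) :
    (v : ℂ) * psiAct m (fbCoeff v t) T + psiAct (m - 1) (fbCoeff v t) T
      = (t : ℂ)⁻¹ *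
          ((v : ℂ) ^ (-2 * m) * psiStarAct m (fbCoeff v t) T -
            (v : ℂ) ^ (-2 * m + 1) * psiStarAct (m - 1) (fbCoeff v t) T) := by
  have hvC : (v : ℂ) ≠ 0 := by exact_mod_cast hv.ne'
  have htC : (t : ℂ) ≠ 0 := by exact_mod_cast ht
  rcases Int.even_or_odd (charge T) with hpar | hpar
  · -- even charge: all coefficients vanish
    have hz1 : ∀ k, psiAct k (fbCoeff v t) T = 0 := by
      intro k
      rw [psiAct]
      split_ifs with hk
      · rw [show fbCoeff v t (T \ {k}) = 0 from if_neg (by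
          rw [charge_diff hT hk]
          rcases hpar with ⟨r, hr⟩
          rintro ⟨s, hs⟩; omega), mul_zero]
      · rfl
    have hz2 : ∀ k, psiStarAct k (fbCoeff v t) T = 0 := by
      intro k
      rw [psiStarAct]
      split_ifs with hk
      · rfl
      · rw [show fbCoeff v t (insert k T) = 0 from if_neg (by
          rw [charge_insert hT hk]
          rcases hpar with ⟨r, hr⟩
          rintro ⟨s, hs⟩; omega), mul_zero]
    simp [hz1, hz2]
  · obtain ⟨n, hn⟩ := hpar
    have hfd : ∀ k ∈ T, fbCoeff v t (T \ {k})
        = ((t ^ n * v ^ (energy T - ((k : ℝ) + 1/2)) : ℝ) : ℂ) := by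
      intro k hk
      rw [fbCoeff, charge_diff hT hk, energy_diff hT hk, if_pos ⟨n, by omega⟩]
      rw [show charge T - 1 = n * 2 by omega, Int.mul_ediv_cancel _ (by norm_num)]
    have hfi : ∀ k ∉ T, fbCoeff v t (insert k T)
        = ((t ^ (n + 1) * v ^ (energy T + ((k : ℝ) + 1/2)) : ℝ) : ℂ) := by
      intro k hk
      rw [fbCoeff, charge_insert hT hk, if_pos ⟨n + 1, by omega⟩, energy_insert hT hk]
      rw [show charge T + 1 = (n+1) * 2 by omega, Int.mul_ediv_cancel _ (by norm_num)]
    set E := energy T with hE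
    have hc0 : (v : ℂ) * ((v ^ (E - ((m : ℝ) + 1/2)) : ℝ) : ℂ)
        = ((v ^ (E - (m : ℝ) + 1/2) : ℝ) : ℂ) := by
      rw [← Complex.ofReal_mul, show E - (m : ℝ) + 1/2 = 1 + (E - ((m : ℝ) + 1/2)) by ring,
        Real.rpow_add hv, Real.rpow_one]
    have hc1 : (v : ℂ) ^ (-2 * m) * ((v ^ (E + ((m : ℝ) + 1/2)) : ℝ) : ℂ)
        = ((v ^ (E - (m : ℝ) + 1/2) : ℝ) : ℂ) := by
      rw [← Complex.ofReal_zpow, ← Complex.ofReal_mul, ← Real.rpow_intCast,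
        ← Real.rpow_add hv]
      congr 1; push_cast; ring
    have hc2 : (v : ℂ) ^ (-2 * m + 1) * ((v ^ (E + (((m - 1 : ℤ) : ℝ) + 1/2)) : ℝ) : ℂ)
        = ((v ^ (E - (m : ℝ) + 1/2) : ℝ) : ℂ) := by
      rw [← Complex.ofReal_zpow, ← Complex.ofReal_mul, ← Real.rpow_intCast,
        ← Real.rpow_add hv]
      congr 1; push_cast; ring
    have hX4 : ((v ^ (E - (((m - 1 : ℤ) : ℝ) + 1/2)) : ℝ) : ℂ)
        = ((v ^ (E - (m : ℝ) + 1/2) : ℝ) : ℂ) := by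
      congr 1; push_cast; ring
    have htn : t ^ (n + 1) = t ^ n * t := zpow_add_one₀ ht n
    simp only [psiAct, psiStarAct, sign_pred hT m]
    by_cases hm : m ∈ T <;> by_cases hm1 : m - 1 ∈ T
    · rw [if_pos hm, if_pos hm1, if_neg (not_not.2 hm), if_neg (not_not.2 hm1),
        if_pos hm, hfd m hm, hfd (m-1) hm1]
      push_cast at hc0 hX4 ⊢
      linear_combination ((-1 : ℂ) ^ jcount T m * (t : ℂ) ^ n) * hc0
        - ((-1 : ℂ) ^ jcount T m * (t : ℂ) ^ n) * hX4
    · rw [if_pos hm, if_neg hm1, if_neg (not_not.2 hm), if_pos hm1,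
        if_pos hm, hfd m hm, hfi (m-1) hm1, htn, eq_comm, inv_mul_eq_iff_eq_mul₀ htC]
      push_cast at hc0 hc2 ⊢
      linear_combination ((-1 : ℂ) ^ jcount T m * (t : ℂ) * (t : ℂ) ^ n) * hc2
        - ((-1 : ℂ) ^ jcount T m * (t : ℂ) * (t : ℂ) ^ n) * hc0
    · rw [if_neg hm, if_pos hm1, if_pos hm, if_neg (not_not.2 hm1),
        if_neg hm, hfd (m-1) hm1, hfi m hm, htn, eq_comm, inv_mul_eq_iff_eq_mul₀ htC]
      push_cast at hc1 hX4 ⊢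
      linear_combination ((-1 : ℂ) ^ jcount T m * (t : ℂ) * (t : ℂ) ^ n) * hc1
        - ((-1 : ℂ) ^ jcount T m * (t : ℂ) * (t : ℂ) ^ n) * hX4
    · rw [if_neg hm, if_neg hm1, if_pos hm, if_pos hm1,
        if_neg hm, hfi m hm, hfi (m-1) hm1, htn, eq_comm, inv_mul_eq_iff_eq_mul₀ htC]
      push_cast at hc1 hc2 ⊢
      linear_combination ((-1 : ℂ) ^ jcount T m * (t : ℂ) * (t : ℂ) ^ n) * hc1
        - ((-1 : ℂ) ^ jcount T m * (t : ℂ) * (t : ℂ) ^ n) * hc2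

end
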